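/- Suppose the C-sequence ⟨C_α : α < κ⟩ is coherent, meaning C_δ = C_α ∩ δ for all α < κ and δ ∈ acc(C_α). If λ₂(γ,β) < α < γ < β < κ, then im(tr_h(α,β)) = im(tr_h(α,γ)) ∪ im(tr_h(γ,β)) for the derived coloring tr_h, where h(α) := min(C_α) if min(C_α) < μ and h(α) := 0 otherwise (for a fixed cardinal μ ≤ κ). In particular, for d(α,β) := max(im(tr_h(α,β))), one has d(α,β) = max{d(α,γ), d(γ,β)}. -/

import Mathlib

open Cardinal Set

/-- The walk `Tr(α,β) : ω → κ` along the `C`-sequence `C`: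
`Tr(α,β)(0) = β`; `Tr(α,β)(n+1) = min(C_{Tr(α,β)(n)} \ α)` as long as the previous
step is above `α`, and `α` from then on. -/
noncomputable def TrW (C : Ordinal → Set Ordinal) (α β : Ordinal) : ℕ → Ordinal
  | 0 => β
  | n + 1 => if α < TrW C α β n then sInf (C (TrW C α β n) ∩ Set.Ici α) else α

/-- `ρ₂(α,β)`: the length of the walk from `β` down to `α`. -/
noncomputable def rho2 (C : Ordinal → Set Ordinal) (α β : Ordinal) : ℕ :=
  sInf {n : ℕ | TrW C α β n = α}

/-- The image of `tr(α,β) = Tr(α,β) ↾ ρ₂(α,β)`. -/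
noncomputable def trIm (C : Ordinal → Set Ordinal) (α β : Ordinal) : Set Ordinal :=
  (fun n => TrW C α β n) '' {n : ℕ | n < rho2 C α β}

/-- `λ(α,β) := max{sup(C_{Tr(α,β)(i)} ∩ α) : i < ρ₂(α,β)}`. -/
noncomputable def lamW (C : Ordinal → Set Ordinal) (α β : Ordinal) : Ordinal :=
  sSup {x | ∃ n < rho2 C α β, x = sSup (C (TrW C α β n) ∩ Set.Iio α)}

/-- `λ₂(α,β) := sup(α ∩ {sup(C_δ ∩ α) : δ ∈ im(tr(α,β))})`. -/
noncomputable def lam2 (C : Ordinal → Set Ordinal) (α β : Ordinal) : Ordinal :=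
  sSup (Set.Iio α ∩ {x | ∃ δ ∈ trIm C α β, x = sSup (C δ ∩ Set.Iio α)})

/-- `acc(s) := {δ ∈ s : sup(s ∩ δ) = δ > 0}`. -/
def accSet (s : Set Ordinal) : Set Ordinal := {δ ∈ s | 0 < δ ∧ sSup (s ∩ Set.Iio δ) = δ}

/-- `C` is a `C`-sequence over `κ`: each `C α` is a closed subset of `α`
with `sup (C α) = sup α`. -/
def IsCSeq (κo : Ordinal) (C : Ordinal → Set Ordinal) : Prop :=
  ∀ α < κo, (∀ x ∈ C α, x < α) ∧ sSup (C α) = sSup (Set.Iio α) ∧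
    ∀ δ < α, 0 < δ → sSup (C α ∩ Set.Iio δ) = δ → δ ∈ C α

/-- The coloring `h : κ → κ` given by `h(α) := min(C_α)` if `min(C_α) < μ`, else `0`. -/
noncomputable def hColor (C : Ordinal → Set Ordinal) (μ : Cardinal) (α : Ordinal) : Ordinal :=
  if sInf (C α) < μ.ord then sInf (C α) else 0

/-- The coloring `d(α,β) := max(im(tr_h(α,β)))`, where `im(tr_h(α,β)) = h '' im(tr(α,β))`. -/
noncomputable def dColor (C : Ordinal → Set Ordinal) (μ : Cardinal) (α β : Ordinal) : Ordinal :=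
  sSup (hColor C μ '' trIm C α β)

section Aux

variable {κo : Ordinal} {C : Ordinal → Set Ordinal}

lemma mem_trIm {a b y : Ordinal} :
    y ∈ trIm C a b ↔ ∃ n, n < rho2 C a b ∧ TrW C a b n = y := by
  simp [trIm, Set.mem_image]

lemma step_aux (hC : IsCSeq κo C) {τ x : Ordinal} (hτ : 0 < τ) (hτx : τ < x) (hx : x < κo) :
    (C x ∩ Set.Ici τ).Nonempty := by
  obtain ⟨helt, hsup, hcl⟩ := hC x hx
  by_contra h
  rw [Set.not_nonempty_iff_eq_empty] at h
  have hsub : C x ⊆ Set.Iio τ := by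
    intro y hy
    by_contra hge
    exact Set.eq_empty_iff_forall_notMem.mp h y ⟨hy, Set.mem_Ici.mpr (not_lt.mp hge)⟩
  have hb1 : sSup (C x) ≤ τ := csSup_le' (fun y hy => (hsub hy).le)
  have hb2 : τ ≤ sSup (Set.Iio x) := le_csSup ⟨x, fun y hy => hy.le⟩ hτx
  have heq2 : sSup (C x ∩ Set.Iio τ) = τ := by
    rw [Set.inter_eq_left.mpr hsub, hsup]
    exact le_antisymm (hsup ▸ hb1) hb2
  exact absurd (hsub (hcl τ hτx hτ heq2)) (lt_irrefl τ)

lemma step_mem (hC : IsCSeq κo C) {τ x : Ordinal} (hτ : 0 < τ) (hτx : τ < x) (hx : x < κo) :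
    sInf (C x ∩ Set.Ici τ) ∈ C x ∧ τ ≤ sInf (C x ∩ Set.Ici τ) ∧ sInf (C x ∩ Set.Ici τ) < x :=
  have h := csInf_mem (step_aux hC hτ hτx hx)
  ⟨h.1, h.2, (hC x hx).1 _ h.1⟩

lemma walk_bounds (hC : IsCSeq κo C) {τ b : Ordinal} (hτ : 0 < τ) (hτb : τ < b) (hb : b < κo) :
    ∀ n, τ ≤ TrW C τ b n ∧ TrW C τ b n ≤ b := by
  intro n
  induction n with
  | zero => exact ⟨hτb.le, le_rfl⟩
  | succ n ih =>
    by_cases hlt : τ < TrW C τ b n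
    · have hs := step_mem hC hτ hlt (lt_of_le_of_lt ih.2 hb)
      simp only [TrW, if_pos hlt]
      exact ⟨hs.2.1, (hs.2.2.trans_le ih.2).le⟩
    · simp only [TrW, if_neg hlt]
      exact ⟨le_rfl, hτb.le⟩

lemma walk_hits (hC : IsCSeq κo C) {τ b : Ordinal} (hτ : 0 < τ) (hτb : τ < b) (hb : b < κo) :
    ∃ n, TrW C τ b n = τ := by
  by_contra h
  push_neg at h
  have hgt : ∀ n, τ < TrW C τ b n := fun n =>
    lt_of_le_of_ne (walk_bounds hC hτ hτb hb n).1 (Ne.symm (h n))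
  have hdec : ∀ n, TrW C τ b (n + 1) < TrW C τ b n := fun n => by
    have hs := step_mem hC hτ (hgt n) (lt_of_le_of_lt (walk_bounds hC hτ hτb hb n).2 hb)
    simp only [TrW, if_pos (hgt n)]
    exact hs.2.2
  obtain ⟨a, ⟨n, rfl⟩, hmin⟩ :=
    Ordinal.lt_wf.has_min (Set.range (TrW C τ b)) ⟨_, Set.mem_range_self 0⟩
  exact hmin _ (Set.mem_range_self (n + 1)) (hdec n)

lemma trW_rho2 (hC : IsCSeq κo C) {τ b : Ordinal} (hτ : 0 < τ) (hτb : τ < b) (hb : b < κo) :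
    TrW C τ b (rho2 C τ b) = τ :=
  Nat.sInf_mem (walk_hits hC hτ hτb hb)

lemma walk_gt (hC : IsCSeq κo C) {τ b : Ordinal} (hτ : 0 < τ) (hτb : τ < b) (hb : b < κo) :
    ∀ n < rho2 C τ b, τ < TrW C τ b n := fun n hn =>
  lt_of_le_of_ne (walk_bounds hC hτ hτb hb n).1 (Ne.symm (Nat.notMem_of_lt_sInf hn))

lemma rho2_pos (hC : IsCSeq κo C) {τ b : Ordinal} (hτ : 0 < τ) (hτb : τ < b) (hb : b < κo) :
    0 < rho2 C τ b := by
  rcases Nat.eq_zero_or_pos (rho2 C τ b) with h | h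
  · have h0 := trW_rho2 hC hτ hτb hb
    rw [h] at h0
    simp only [TrW] at h0
    exact absurd h0 (ne_of_gt hτb)
  · exact h

lemma walk_shift (C : Ordinal → Set Ordinal) (a b b' : Ordinal) (k k' : ℕ)
    (h : TrW C a b k = TrW C a b' k') : ∀ j, TrW C a b (k + j) = TrW C a b' (k' + j) := by
  intro j
  induction j with
  | zero => exact h
  | succ j ih =>
    rw [← Nat.add_assoc, ← Nat.add_assoc]
    simp only [TrW, ih]

lemma sInf_inter_Ici_eq {s : Set Ordinal} {a g : Ordinal} (hag : a ≤ g)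
    (hne : (s ∩ Set.Ici g).Nonempty) (hmid : ∀ y ∈ s, a ≤ y → g ≤ y) :
    sInf (s ∩ Set.Ici a) = sInf (s ∩ Set.Ici g) := by
  apply le_antisymm
  · exact csInf_le_csInf (OrderBot.bddBelow _) hne (fun y hy => ⟨hy.1, hag.trans hy.2⟩)
  · refine le_csInf (hne.mono fun y hy => ⟨hy.1, hag.trans hy.2⟩) ?_
    intro y hy
    exact csInf_le (OrderBot.bddBelow _) ⟨hy.1, hmid y hy.1 hy.2⟩

lemma no_middle {α γ β : Ordinal} (h1 : lam2 C γ β < α) {δ : Ordinal}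
    (hδ : δ ∈ trIm C γ β) (hx : sSup (C δ ∩ Set.Iio γ) < γ) :
    ∀ y ∈ C δ, y < γ → y < α := by
  intro y hy hyγ
  have hyx : y ≤ sSup (C δ ∩ Set.Iio γ) := le_csSup ⟨γ, fun z hz => hz.2.le⟩ ⟨hy, hyγ⟩
  have hlam : sSup (C δ ∩ Set.Iio γ) ≤ lam2 C γ β :=
    le_csSup ⟨γ, fun z hz => hz.1.le⟩ ⟨hx, δ, hδ, rfl⟩
  exact lt_of_le_of_lt (hyx.trans hlam) h1

end Aux

section Agree

variable {κo : Ordinal} {C : Ordinal → Set Ordinal}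

lemma agree (hC : IsCSeq κo C) {α γ β : Ordinal}
    (h1 : lam2 C γ β < α) (h2 : α < γ) (h3 : γ < β) (h4 : β < κo) :
    ∀ n < rho2 C γ β, TrW C α β n = TrW C γ β n := by
  have h0γ : 0 < γ := lt_trans (lt_of_le_of_lt zero_le h1) h2
  intro n
  induction n with
  | zero => intro _; rfl
  | succ n ih =>
    intro hn1
    have hn : n < rho2 C γ β := Nat.lt_of_succ_lt hn1
    have heq := ih hn
    have hγδ : γ < TrW C γ β n := walk_gt hC h0γ h3 h4 n hn
    have hδκ : TrW C γ β n < κo := lt_of_le_of_lt (walk_bounds hC h0γ h3 h4 n).2 h4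
    set δ := TrW C γ β n with hδ
    have hδmem : δ ∈ trIm C γ β := mem_trIm.mpr ⟨n, hn, rfl⟩
    have hεdef : TrW C γ β (n + 1) = sInf (C δ ∩ Set.Ici γ) := by
      simp only [TrW, ← hδ, if_pos hγδ]
    have hγε : γ < TrW C γ β (n + 1) := walk_gt hC h0γ h3 h4 (n + 1) hn1
    have hxlt : sSup (C δ ∩ Set.Iio γ) < γ := by
      rcases lt_or_eq_of_le (csSup_le' (fun z hz => hz.2.le) :
          sSup (C δ ∩ Set.Iio γ) ≤ γ) with h | h
      · exact h
      · exfalso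
        have hγC : γ ∈ C δ := (hC δ hδκ).2.2 γ hγδ h0γ h
        have hle : TrW C γ β (n + 1) ≤ γ := by
          rw [hεdef]; exact csInf_le (OrderBot.bddBelow _) ⟨hγC, Set.self_mem_Ici⟩
        exact absurd hle (not_le.mpr hγε)
    have hαδ : α < δ := h2.trans hγδ
    have hα1 : TrW C α β (n + 1) = sInf (C δ ∩ Set.Ici α) := by
      simp only [TrW, heq, ← hδ, if_pos hαδ]
    rw [hα1, hεdef]
    refine sInf_inter_Ici_eq h2.le (step_aux hC h0γ hγδ hδκ) ?_
    intro y hy hay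
    by_contra hyγ
    exact absurd hay (not_le.mpr (no_middle h1 hδmem hxlt y hy (not_le.mp hyγ)))

end Agree

lemma hColor_bdd {κo : Ordinal} {C : Ordinal → Set Ordinal} (hC : IsCSeq κo C)
    {μ : Cardinal} {τ b : Ordinal} (hτ : 0 < τ) (hτb : τ < b) (hb : b < κo) :
    ∀ y ∈ trIm C τ b, hColor C μ y ≤ b := by
  intro y hy
  obtain ⟨n, hn, rfl⟩ := mem_trIm.mp hy
  have hgt := walk_gt hC hτ hτb hb n hn
  have hle := (walk_bounds hC hτ hτb hb n).2
  have hκ := lt_of_le_of_lt hle hb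
  have hne : (C (TrW C τ b n)).Nonempty := (step_aux hC hτ hgt hκ).mono Set.inter_subset_left
  have hinf : sInf (C (TrW C τ b n)) ≤ b :=
    le_of_lt (lt_of_lt_of_le ((hC _ hκ).1 _ (csInf_mem hne)) hle)
  unfold hColor
  split
  · exact hinf
  · exact zero_le

theorem stmt3' {κo : Ordinal} (μ : Cardinal) (C : Ordinal → Set Ordinal) (hC : IsCSeq κo C)
    (hcoh : ∀ α < κo, ∀ δ ∈ accSet (C α), C δ = C α ∩ Set.Iio δ)
    (α β γ : Ordinal)
    (h1 : lam2 C γ β < α) (h2 : α < γ) (h3 : γ < β) (h4 : β < κo) :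
    hColor C μ '' trIm C α β = hColor C μ '' trIm C α γ ∪ hColor C μ '' trIm C γ β ∧
      dColor C μ α β = max (dColor C μ α γ) (dColor C μ γ β) := by
  have h0α : 0 < α := lt_of_le_of_lt zero_le h1
  have h0γ : 0 < γ := h0α.trans h2
  have hγκ : γ < κo := h3.trans h4
  have hmpos : 0 < rho2 C γ β := rho2_pos hC h0γ h3 h4
  have hrpos : 0 < rho2 C α γ := rho2_pos hC h0α h2 hγκ
  have key : hColor C μ '' trIm C α β
      = hColor C μ '' trIm C α γ ∪ hColor C μ '' trIm C γ β := by
    obtain ⟨k, hk⟩ : ∃ k, rho2 C γ β = k + 1 := ⟨rho2 C γ β - 1, by omega⟩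
    have hkm : k < rho2 C γ β := by omega
    have heqk : TrW C α β k = TrW C γ β k := agree hC h1 h2 h3 h4 k hkm
    have hγδ : γ < TrW C γ β k := walk_gt hC h0γ h3 h4 k hkm
    have hδκ : TrW C γ β k < κo := lt_of_le_of_lt (walk_bounds hC h0γ h3 h4 k).2 h4
    have hδmem : TrW C γ β k ∈ trIm C γ β := mem_trIm.mpr ⟨k, hkm, rfl⟩
    have hstepγ : TrW C γ β (k + 1) = sInf (C (TrW C γ β k) ∩ Set.Ici γ) := by
      simp only [TrW, if_pos hγδ]
    have hγval : sInf (C (TrW C γ β k) ∩ Set.Ici γ) = γ := by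
      have h5 := trW_rho2 hC h0γ h3 h4
      rw [hk, hstepγ] at h5
      exact h5
    have hγC : γ ∈ C (TrW C γ β k) := by
      have h7 := (csInf_mem (step_aux hC h0γ hγδ hδκ)).1
      rwa [hγval] at h7
    have hαδ : α < TrW C γ β k := h2.trans hγδ
    have hstepα : TrW C α β (k + 1) = sInf (C (TrW C γ β k) ∩ Set.Ici α) := by
      simp only [TrW, heqk, if_pos hαδ]
    have hxle : sSup (C (TrW C γ β k) ∩ Set.Iio γ) ≤ γ := csSup_le' (fun z hz => hz.2.le)
    rcases lt_or_eq_of_le hxle with hxlt | hxeq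
    -- Case B : sup (C δ ∩ γ) < γ, walk passes through γ
    · have hmid : ∀ y ∈ C (TrW C γ β k), α ≤ y → γ ≤ y := by
        intro y hy hay
        by_contra hyγ
        exact absurd hay (not_le.mpr (no_middle h1 hδmem hxlt y hy (not_le.mp hyγ)))
      have hαstep : TrW C α β (k + 1) = γ := by
        rw [hstepα, sInf_inter_Ici_eq h2.le (step_aux hC h0γ hγδ hδκ) hmid, hγval]
      have hshift : ∀ j, TrW C α β (rho2 C γ β + j) = TrW C α γ j := by
        intro j
        have h0 : TrW C α β (rho2 C γ β + 0) = TrW C α γ 0 := by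
          rw [Nat.add_zero, hk]
          exact hαstep
        have := walk_shift C α β γ (rho2 C γ β) 0 (by rw [Nat.add_zero] at h0; exact h0) j
        rwa [Nat.zero_add] at this
      have hmem : TrW C α β (rho2 C γ β + rho2 C α γ) = α := by
        rw [hshift]
        exact trW_rho2 hC h0α h2 hγκ
      have hne : ∀ n < rho2 C γ β + rho2 C α γ, TrW C α β n ≠ α := by
        intro n hn
        rcases lt_or_ge n (rho2 C γ β) with hlt | hge
        · rw [agree hC h1 h2 h3 h4 n hlt]
          exact ne_of_gt (h2.trans (walk_gt hC h0γ h3 h4 n hlt))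
        · obtain ⟨j, rfl⟩ := Nat.exists_eq_add_of_le hge
          rw [hshift j]
          exact ne_of_gt (walk_gt hC h0α h2 hγκ j (by omega))
      have hrho : rho2 C α β = rho2 C γ β + rho2 C α γ := by
        have hle : rho2 C α β ≤ rho2 C γ β + rho2 C α γ := Nat.sInf_le hmem
        have hnl : ¬ rho2 C α β < rho2 C γ β + rho2 C α γ := fun hlt =>
          hne _ hlt (Nat.sInf_mem (⟨_, hmem⟩ : {n : ℕ | TrW C α β n = α}.Nonempty))
        omega
      have htr : trIm C α β = trIm C γ β ∪ trIm C α γ := by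
        ext y
        simp only [mem_trIm, Set.mem_union]
        constructor
        · rintro ⟨n, hn, rfl⟩
          rw [hrho] at hn
          rcases lt_or_ge n (rho2 C γ β) with hlt | hge
          · exact Or.inl ⟨n, hlt, (agree hC h1 h2 h3 h4 n hlt).symm⟩
          · obtain ⟨j, rfl⟩ := Nat.exists_eq_add_of_le hge
            exact Or.inr ⟨j, by omega, (hshift j).symm⟩
        · rintro (⟨n, hn, rfl⟩ | ⟨j, hj, rfl⟩)
          · exact ⟨n, by omega, agree hC h1 h2 h3 h4 n hn⟩
          · exact ⟨rho2 C γ β + j, by omega, hshift j⟩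
      rw [htr, Set.image_union, Set.union_comm]
    -- Case A : γ is an accumulation point of C δ, walk jumps over γ
    · have hcohδ : C γ = C (TrW C γ β k) ∩ Set.Iio γ :=
        hcoh _ hδκ γ ⟨hγC, h0γ, hxeq⟩
      have hε1 : TrW C α γ 1 = sInf (C γ ∩ Set.Ici α) := by
        simp only [TrW]; exact if_pos h2
      have hneγ : (C γ ∩ Set.Ici α).Nonempty := step_aux hC h0α h2 hγκ
      have hε1mem := csInf_mem hneγ
      have hε1lt : sInf (C γ ∩ Set.Ici α) < γ := (hC γ hγκ).1 _ hε1mem.1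
      have heδ : sInf (C γ ∩ Set.Ici α) ∈ C (TrW C γ β k) ∩ Set.Iio γ := by
        rw [← hcohδ]
        exact hε1mem.1
      have hstepA : TrW C α β (k + 1) = TrW C α γ 1 := by
        rw [hstepα, hε1]
        apply le_antisymm
        · exact csInf_le (OrderBot.bddBelow _) ⟨heδ.1, hε1mem.2⟩
        · refine le_csInf ⟨_, heδ.1, hε1mem.2⟩ ?_
          intro y hy
          rcases lt_or_ge y γ with hyγ | hyγ
          · have : y ∈ C γ ∩ Set.Ici α := ⟨by rw [hcohδ]; exact ⟨hy.1, hyγ⟩, hy.2⟩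
            exact csInf_le (OrderBot.bddBelow _) this
          · exact le_of_lt (lt_of_lt_of_le hε1lt hyγ)
      obtain ⟨r', hr'⟩ : ∃ r', rho2 C α γ = r' + 1 := ⟨rho2 C α γ - 1, by omega⟩
      have hshift : ∀ j, TrW C α β (rho2 C γ β + j) = TrW C α γ (1 + j) := by
        intro j
        have h0 : TrW C α β (rho2 C γ β) = TrW C α γ 1 := by rw [hk]; exact hstepA
        exact walk_shift C α β γ (rho2 C γ β) 1 h0 j
      have hmem : TrW C α β (rho2 C γ β + r') = α := by
        rw [hshift r']
        have h6 : 1 + r' = rho2 C α γ := by omega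
        rw [h6]
        exact trW_rho2 hC h0α h2 hγκ
      have hne : ∀ n < rho2 C γ β + r', TrW C α β n ≠ α := by
        intro n hn
        rcases lt_or_ge n (rho2 C γ β) with hlt | hge
        · rw [agree hC h1 h2 h3 h4 n hlt]
          exact ne_of_gt (h2.trans (walk_gt hC h0γ h3 h4 n hlt))
        · obtain ⟨j, rfl⟩ := Nat.exists_eq_add_of_le hge
          rw [hshift j]
          exact ne_of_gt (walk_gt hC h0α h2 hγκ (1 + j) (by omega))
      have hrho : rho2 C α β = rho2 C γ β + r' := by
        have hle : rho2 C α β ≤ rho2 C γ β + r' := Nat.sInf_le hmem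
        have hnl : ¬ rho2 C α β < rho2 C γ β + r' := fun hlt =>
          hne _ hlt (Nat.sInf_mem (⟨_, hmem⟩ : {n : ℕ | TrW C α β n = α}.Nonempty))
        omega
      have htr : trIm C α β
          = trIm C γ β ∪ (fun i => TrW C α γ i) '' {i | 0 < i ∧ i < rho2 C α γ} := by
        ext y
        simp only [mem_trIm, Set.mem_union, Set.mem_image, Set.mem_setOf_eq]
        constructor
        · rintro ⟨n, hn, rfl⟩
          rw [hrho] at hn
          rcases lt_or_ge n (rho2 C γ β) with hlt | hge
          · exact Or.inl ⟨n, hlt, (agree hC h1 h2 h3 h4 n hlt).symm⟩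
          · obtain ⟨j, rfl⟩ := Nat.exists_eq_add_of_le hge
            exact Or.inr ⟨1 + j, ⟨by omega, by omega⟩, (hshift j).symm⟩
        · rintro (⟨n, hn, rfl⟩ | ⟨i, ⟨hi0, hir⟩, rfl⟩)
          · exact ⟨n, by omega, agree hC h1 h2 h3 h4 n hn⟩
          · obtain ⟨j, rfl⟩ : ∃ j, i = 1 + j := ⟨i - 1, by omega⟩
            exact ⟨rho2 C γ β + j, by omega, hshift j⟩
      have htrαγ : trIm C α γ
          = insert γ ((fun i => TrW C α γ i) '' {i | 0 < i ∧ i < rho2 C α γ}) := by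
        ext y
        simp only [mem_trIm, Set.mem_insert_iff, Set.mem_image, Set.mem_setOf_eq]
        constructor
        · rintro ⟨n, hn, rfl⟩
          rcases Nat.eq_zero_or_pos n with rfl | hpos
          · exact Or.inl rfl
          · exact Or.inr ⟨n, ⟨hpos, hn⟩, rfl⟩
        · rintro (rfl | ⟨i, ⟨hi0, hir⟩, rfl⟩)
          · exact ⟨0, hrpos, rfl⟩
          · exact ⟨i, hir, rfl⟩
      have hCγne : (C γ).Nonempty := hneγ.mono Set.inter_subset_left
      have hsub : C γ ⊆ C (TrW C γ β k) := by
        rw [hcohδ]; exact Set.inter_subset_left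
      have hinfeq : sInf (C γ) = sInf (C (TrW C γ β k)) := by
        have h1' : sInf (C (TrW C γ β k)) ≤ sInf (C γ) :=
          csInf_le_csInf (OrderBot.bddBelow _) hCγne hsub
        have h2' : sInf (C (TrW C γ β k)) ∈ C (TrW C γ β k) := csInf_mem (hCγne.mono hsub)
        have h3' : sInf (C (TrW C γ β k)) < γ :=
          lt_of_le_of_lt h1' ((hC γ hγκ).1 _ (csInf_mem hCγne))
        have h4' : sInf (C (TrW C γ β k)) ∈ C γ := by rw [hcohδ]; exact ⟨h2', h3'⟩
        exact le_antisymm (csInf_le (OrderBot.bddBelow _) h4') h1'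
      have hhγδ : hColor C μ γ = hColor C μ (TrW C γ β k) := by
        unfold hColor; rw [hinfeq]
      rw [htr, Set.image_union, htrαγ, Set.image_insert_eq, hhγδ, Set.insert_union]
      have hmem' : hColor C μ (TrW C γ β k) ∈
          hColor C μ '' ((fun i => TrW C α γ i) '' {i | 0 < i ∧ i < rho2 C α γ}) ∪
            hColor C μ '' trIm C γ β :=
        Or.inr (Set.mem_image_of_mem _ hδmem)
      rw [Set.insert_eq_self.mpr hmem']
      exact Set.union_comm _ _
  refine ⟨key, ?_⟩
  have hbαγ : BddAbove (hColor C μ '' trIm C α γ) := by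
    refine ⟨γ, ?_⟩
    rintro y ⟨z, hz, rfl⟩
    exact hColor_bdd hC h0α h2 hγκ z hz
  have hbγβ : BddAbove (hColor C μ '' trIm C γ β) := by
    refine ⟨β, ?_⟩
    rintro y ⟨z, hz, rfl⟩
    exact hColor_bdd hC h0γ h3 h4 z hz
  have hneαγ : (hColor C μ '' trIm C α γ).Nonempty :=
    ⟨_, Set.mem_image_of_mem _ (mem_trIm.mpr ⟨0, hrpos, rfl⟩)⟩
  have hneγβ : (hColor C μ '' trIm C γ β).Nonempty :=
    ⟨_, Set.mem_image_of_mem _ (mem_trIm.mpr ⟨0, hmpos, rfl⟩)⟩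
  unfold dColor
  rw [key, csSup_union hbαγ hneαγ hbγβ hneγβ]

/-- Claim 3.1.1: for a coherent `C`-sequence and the coloring `h` derived from `μ`,
if `λ₂(γ,β) < α < γ < β < κ` then
`im(tr_h(α,β)) = im(tr_h(α,γ)) ∪ im(tr_h(γ,β))`, and in particular
`d(α,β) = max{d(α,γ), d(γ,β)}`. -/
theorem stmt3 (κ μ : Cardinal) (hreg : κ.IsRegular) (huncb : Cardinal.aleph 0 < κ)
    (hμ : μ ≤ κ) (C : Ordinal → Set Ordinal) (hC : IsCSeq κ.ord C)
    (hcoh : ∀ α < κ.ord, ∀ δ ∈ accSet (C α), C δ = C α ∩ Set.Iio δ)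
    (α β γ : Ordinal)
    (h1 : lam2 C γ β < α) (h2 : α < γ) (h3 : γ < β) (h4 : β < κ.ord) :
    hColor C μ '' trIm C α β = hColor C μ '' trIm C α γ ∪ hColor C μ '' trIm C γ β ∧
      dColor C μ α β = max (dColor C μ α γ) (dColor C μ γ β) :=
  stmt3' μ C hC hcoh α β γ h1 h2 h3 h4
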